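/- Identifiability of the VI estimator: if the smallest eigenvalue λ₁ of the Gram matrix 𝕎 = (1/T) Σ_{t=1}^T w_t w_tᵀ is strictly positive, then there is exactly one θ̂ ∈ Θ such that ⟨F_T(θ), θ − θ̂⟩ ≥ 0 for all θ ∈ Θ; that is, the weak solution of VI[F_T, Θ] exists and is unique. -/

import Mathlib

open Finset
open scoped RealInnerProductSpace

/-- Mean value bound: a derivative lower bound gives a coercivity bound for slopes. -/
lemma vi_slope_lower_bound (g g' : ℝ → ℝ) (mg : ℝ)
    (hg_deriv : ∀ x, HasDerivAt g (g' x) x)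
    (hg'_bound : ∀ x, mg ≤ g' x) (a b : ℝ) :
    mg * (a - b) ^ 2 ≤ (g a - g b) * (a - b) := by
  rcases lt_trichotomy a b with h | h | h
  · obtain ⟨c, _, hc⟩ := exists_hasDerivAt_eq_slope g g' h
      (fun x _ => (hg_deriv x).continuousAt.continuousWithinAt)
      (fun x _ => hg_deriv x)
    have hc' : g' c * (b - a) = g b - g a := (eq_div_iff (by linarith)).mp hc
    nlinarith [hg'_bound c, sq_nonneg (a - b)]
  · simp [h]
  · obtain ⟨c, _, hc⟩ := exists_hasDerivAt_eq_slope g g' h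
      (fun x _ => (hg_deriv x).continuousAt.continuousWithinAt)
      (fun x _ => hg_deriv x)
    have hc' : g' c * (a - b) = g a - g b := (eq_div_iff (by linarith)).mp hc
    nlinarith [hg'_bound c, sq_nonneg (a - b)]

set_option maxHeartbeats 1000000 in
/-- Identifiability of the VI estimator: if the smallest
eigenvalue `λ₁` of the Gram matrix `𝕎 = (1/T) ∑ₜ wₜ wₜᵀ` (characterized as the
minimum Rayleigh quotient over the unit sphere) is strictly positive, then the weak
solution of `VI[F_T, Θ]` exists and is unique, where
`F_T(θ) = (1/T) ∑ₜ wₜ (g(⟪wₜ, θ⟫) − yₜ)`. -/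
theorem vi_estimator_identifiable
    (T d : ℕ) (hT : 1 ≤ T) (hd : 1 ≤ d)
    (w : ℕ → EuclideanSpace ℝ (Fin d)) (y : ℕ → ℝ)
    (g g' : ℝ → ℝ) (mg : ℝ) (hmg : 0 < mg)
    (hg_deriv : ∀ x, HasDerivAt g (g' x) x)
    (hg'_bound : ∀ x, mg ≤ g' x)
    (F : EuclideanSpace ℝ (Fin d) → EuclideanSpace ℝ (Fin d))
    (hF : ∀ θ, F θ = (T : ℝ)⁻¹ • ∑ t ∈ Finset.Icc 1 T, (g ⟪w t, θ⟫ - y t) • w t)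
    (Θ : Set (EuclideanSpace ℝ (Fin d)))
    (hne : Θ.Nonempty) (hconv : Convex ℝ Θ) (hcomp : IsCompact Θ)
    (lam1 : ℝ)
    (hlam1 : lam1 =
      ⨅ v : Metric.sphere (0 : EuclideanSpace ℝ (Fin d)) 1,
        (T : ℝ)⁻¹ * ∑ t ∈ Finset.Icc 1 T, ⟪w t, (v : EuclideanSpace ℝ (Fin d))⟫ ^ 2)
    (hpos : 0 < lam1) :
    ∃! θhat, θhat ∈ Θ ∧ ∀ θ ∈ Θ, 0 ≤ ⟪F θ, θ - θhat⟫ := by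
  have hTinv : (0:ℝ) ≤ (T:ℝ)⁻¹ := by positivity
  have hgcont : Continuous g := continuous_iff_continuousAt.mpr fun x => (hg_deriv x).continuousAt
  -- inner product expansion of F
  have Finner : ∀ θ u : EuclideanSpace ℝ (Fin d),
      ⟪F θ, u⟫ = (T:ℝ)⁻¹ * ∑ t ∈ Finset.Icc 1 T, (g ⟪w t, θ⟫ - y t) * ⟪w t, u⟫ := by
    intro θ u
    rw [hF, real_inner_smul_left, sum_inner]
    congr 1
    exact Finset.sum_congr rfl fun t _ => real_inner_smul_left _ _ _
  -- strong monotonicity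
  have hmono : ∀ θ₁ θ₂ : EuclideanSpace ℝ (Fin d),
      mg * ((T:ℝ)⁻¹ * ∑ t ∈ Finset.Icc 1 T, ⟪w t, θ₁ - θ₂⟫ ^ 2) ≤ ⟪F θ₁ - F θ₂, θ₁ - θ₂⟫ := by
    intro θ₁ θ₂
    have expand : ⟪F θ₁ - F θ₂, θ₁ - θ₂⟫
        = (T:ℝ)⁻¹ * ∑ t ∈ Finset.Icc 1 T,
            ((g ⟪w t, θ₁⟫ - y t) * ⟪w t, θ₁ - θ₂⟫ - (g ⟪w t, θ₂⟫ - y t) * ⟪w t, θ₁ - θ₂⟫) := by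
      rw [inner_sub_left, Finner, Finner, ← mul_sub, ← Finset.sum_sub_distrib]
    have key : ∀ t ∈ Finset.Icc 1 T,
        mg * ⟪w t, θ₁ - θ₂⟫ ^ 2
          ≤ (g ⟪w t, θ₁⟫ - y t) * ⟪w t, θ₁ - θ₂⟫ - (g ⟪w t, θ₂⟫ - y t) * ⟪w t, θ₁ - θ₂⟫ := by
      intro t _
      have hc : ⟪w t, θ₁ - θ₂⟫ = ⟪w t, θ₁⟫ - ⟪w t, θ₂⟫ := inner_sub_right _ _ _
      rw [hc]
      have := vi_slope_lower_bound g g' mg hg_deriv hg'_bound ⟪w t, θ₁⟫ ⟪w t, θ₂⟫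
      nlinarith [this]
    calc mg * ((T:ℝ)⁻¹ * ∑ t ∈ Finset.Icc 1 T, ⟪w t, θ₁ - θ₂⟫ ^ 2)
        = (T:ℝ)⁻¹ * ∑ t ∈ Finset.Icc 1 T, mg * ⟪w t, θ₁ - θ₂⟫ ^ 2 := by
          simp only [Finset.mul_sum]; exact Finset.sum_congr rfl fun t _ => by ring
      _ ≤ (T:ℝ)⁻¹ * ∑ t ∈ Finset.Icc 1 T,
            ((g ⟪w t, θ₁⟫ - y t) * ⟪w t, θ₁ - θ₂⟫ - (g ⟪w t, θ₂⟫ - y t) * ⟪w t, θ₁ - θ₂⟫) :=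
          mul_le_mul_of_nonneg_left (Finset.sum_le_sum key) hTinv
      _ = ⟪F θ₁ - F θ₂, θ₁ - θ₂⟫ := expand.symm
  -- eigenvalue lower bound
  have hlam : ∀ u : EuclideanSpace ℝ (Fin d),
      lam1 * ‖u‖ ^ 2 ≤ (T:ℝ)⁻¹ * ∑ t ∈ Finset.Icc 1 T, ⟪w t, u⟫ ^ 2 := by
    intro u
    by_cases hu : u = 0
    · simp [hu]
    · have hnu : (0:ℝ) < ‖u‖ := norm_pos_iff.mpr hu
      set v : EuclideanSpace ℝ (Fin d) := ‖u‖⁻¹ • u with hvdef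
      have hv : ‖v‖ = 1 := by
        rw [hvdef, norm_smul, norm_inv, norm_norm, inv_mul_cancel₀ hnu.ne']
      have hvs : v ∈ Metric.sphere (0 : EuclideanSpace ℝ (Fin d)) 1 := by
        rwa [mem_sphere_zero_iff_norm]
      have hbdd : BddBelow (Set.range fun p : Metric.sphere (0 : EuclideanSpace ℝ (Fin d)) 1 =>
          (T:ℝ)⁻¹ * ∑ t ∈ Finset.Icc 1 T, ⟪w t, (p : EuclideanSpace ℝ (Fin d))⟫ ^ 2) := by
        refine ⟨0, ?_⟩
        rintro x ⟨p, rfl⟩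
        positivity
      have h1 : lam1 ≤ (T:ℝ)⁻¹ * ∑ t ∈ Finset.Icc 1 T, ⟪w t, v⟫ ^ 2 := by
        rw [hlam1]
        exact ciInf_le hbdd (⟨v, hvs⟩ : Metric.sphere (0 : EuclideanSpace ℝ (Fin d)) 1)
      have h2 : ∀ t, ⟪w t, v⟫ ^ 2 = ‖u‖⁻¹ ^ 2 * ⟪w t, u⟫ ^ 2 := by
        intro t
        rw [hvdef, real_inner_smul_right]
        ring
      have h1' : lam1 ≤ ‖u‖⁻¹ ^ 2 * ((T:ℝ)⁻¹ * ∑ t ∈ Finset.Icc 1 T, ⟪w t, u⟫ ^ 2) := by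
        calc lam1 ≤ (T:ℝ)⁻¹ * ∑ t ∈ Finset.Icc 1 T, ⟪w t, v⟫ ^ 2 := h1
          _ = ‖u‖⁻¹ ^ 2 * ((T:ℝ)⁻¹ * ∑ t ∈ Finset.Icc 1 T, ⟪w t, u⟫ ^ 2) := by
              simp only [h2, Finset.mul_sum]
              exact Finset.sum_congr rfl fun t _ => by ring
      have h3 := mul_le_mul_of_nonneg_right h1' (sq_nonneg ‖u‖)
      have h4 : ‖u‖⁻¹ ^ 2 * ((T:ℝ)⁻¹ * ∑ t ∈ Finset.Icc 1 T, ⟪w t, u⟫ ^ 2) * ‖u‖ ^ 2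
          = (T:ℝ)⁻¹ * ∑ t ∈ Finset.Icc 1 T, ⟪w t, u⟫ ^ 2 := by
        field_simp
      rw [h4] at h3
      exact h3
  -- potential function
  set G : ℝ → ℝ := fun x => ∫ s in (0:ℝ)..x, g s with hGdef
  have hG : ∀ x, HasDerivAt G (g x) x := fun x =>
    (hgcont.integral_hasStrictDerivAt 0 x).hasDerivAt
  set Φ : EuclideanSpace ℝ (Fin d) → ℝ :=
    fun θ => (T:ℝ)⁻¹ * ∑ t ∈ Finset.Icc 1 T, (G ⟪w t, θ⟫ - y t * ⟪w t, θ⟫) with hΦdef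
  have hGc : Continuous G := continuous_iff_continuousAt.mpr fun x => (hG x).continuousAt
  have hΦc : Continuous Φ := by
    apply continuous_const.mul
    apply continuous_finset_sum
    intro t _
    have hwc : Continuous fun θ : EuclideanSpace ℝ (Fin d) => ⟪w t, θ⟫ :=
      continuous_const.inner continuous_id
    exact (hGc.comp hwc).sub (continuous_const.mul hwc)
  obtain ⟨θhat, hθΘ, hmin⟩ := hcomp.exists_isMinOn hne hΦc.continuousOn
  -- θhat is a weak solution
  have sol : ∀ θ ∈ Θ, 0 ≤ ⟪F θ, θ - θhat⟫ := by
    intro θ hθ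
    set v : EuclideanSpace ℝ (Fin d) := θ - θhat with hvdef
    have hpt : ∀ (s : ℝ) t, ⟪w t, θhat + s • v⟫ = ⟪w t, θhat⟫ + s * ⟪w t, v⟫ := by
      intro s t
      rw [inner_add_right, real_inner_smul_right]
    have hΦeq : ∀ s : ℝ, Φ (θhat + s • v)
        = (T:ℝ)⁻¹ * ∑ t ∈ Finset.Icc 1 T,
            (G (⟪w t, θhat⟫ + s * ⟪w t, v⟫) - y t * (⟪w t, θhat⟫ + s * ⟪w t, v⟫)) := by
      intro s
      simp only [hΦdef, hpt]
    have hFeq : ∀ s : ℝ, ⟪F (θhat + s • v), v⟫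
        = (T:ℝ)⁻¹ * ∑ t ∈ Finset.Icc 1 T,
            (g (⟪w t, θhat⟫ + s * ⟪w t, v⟫) - y t) * ⟪w t, v⟫ := by
      intro s
      rw [Finner]
      congr 1
      exact Finset.sum_congr rfl fun t _ => by rw [hpt]
    have hH : ∀ s : ℝ, HasDerivAt (fun s : ℝ => Φ (θhat + s • v)) ⟪F (θhat + s • v), v⟫ s := by
      intro s
      have hH' : HasDerivAt (fun s : ℝ => (T:ℝ)⁻¹ * ∑ t ∈ Finset.Icc 1 T,
          (G (⟪w t, θhat⟫ + s * ⟪w t, v⟫) - y t * (⟪w t, θhat⟫ + s * ⟪w t, v⟫)))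
          ((T:ℝ)⁻¹ * ∑ t ∈ Finset.Icc 1 T,
            (g (⟪w t, θhat⟫ + s * ⟪w t, v⟫) - y t) * ⟪w t, v⟫) s := by
        apply HasDerivAt.const_mul
        apply HasDerivAt.fun_sum
        intro t _
        have haff : HasDerivAt (fun s : ℝ => ⟪w t, θhat⟫ + s * ⟪w t, v⟫) ⟪w t, v⟫ s := by
          simpa using ((hasDerivAt_id s).mul_const ⟪w t, v⟫).const_add ⟪w t, θhat⟫
        have h1 := (hG (⟪w t, θhat⟫ + s * ⟪w t, v⟫)).comp s haff
        have h2 := haff.const_mul (y t)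
        convert h1.sub h2 using 1
        · rfl
        ring
      simpa only [← hΦeq, ← hFeq] using hH'
    obtain ⟨c, hc, hceq⟩ := exists_hasDerivAt_eq_slope (fun s : ℝ => Φ (θhat + s • v))
      (fun s : ℝ => ⟪F (θhat + s • v), v⟫) one_pos
      (continuous_iff_continuousAt.mpr fun x => (hH x).continuousAt).continuousOn
      (fun x _ => hH x)
    have e1 : θhat + (1:ℝ) • v = θ := by rw [one_smul, hvdef]; abel
    have e0 : θhat + (0:ℝ) • v = θhat := by simp
    have hge : 0 ≤ ⟪F (θhat + c • v), v⟫ := by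
      rw [hceq, e1, e0]
      have hle : Φ θhat ≤ Φ θ := hmin hθ
      simp only [sub_zero, div_one]
      linarith
    have hm := hmono (θhat + (1:ℝ) • v) (θhat + c • v)
    have hdiff : (θhat + (1:ℝ) • v) - (θhat + c • v) = ((1:ℝ) - c) • v := by
      rw [add_sub_add_left_eq_sub, ← sub_smul]
    rw [hdiff] at hm
    have hsq : (0:ℝ) ≤ mg * ((T:ℝ)⁻¹ * ∑ t ∈ Finset.Icc 1 T, ⟪w t, ((1:ℝ) - c) • v⟫ ^ 2) := by
      positivity
    have hm' := le_trans hsq hm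
    rw [inner_sub_left, real_inner_smul_right, real_inner_smul_right, e1] at hm'
    have hc1 : 0 < 1 - c := by linarith [hc.2]
    nlinarith [hge, hm', hc1]
  refine ⟨θhat, ⟨hθΘ, sol⟩, ?_⟩
  -- uniqueness
  rintro ψ ⟨hψΘ, hψ⟩
  set u : EuclideanSpace ℝ (Fin d) := ψ - θhat with hu
  have hmem : ∀ s : ℝ, 0 ≤ s → s ≤ 1 → θhat + s • u ∈ Θ := by
    intro s h0 h1
    have key : θhat + s • u = (1 - s) • θhat + s • ψ := by
      rw [hu]; module
    rw [key]
    exact hconv hθΘ hψΘ (by linarith) h0 (by ring)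
  have hzero : ∀ s : ℝ, 0 < s → s < 1 → ⟪F (θhat + s • u), u⟫ = 0 := by
    intro s h0 h1
    have hmemS := hmem s h0.le h1.le
    have hA := sol (θhat + s • u) hmemS
    have hB := hψ (θhat + s • u) hmemS
    have e1 : θhat + s • u - θhat = s • u := add_sub_cancel_left _ _
    have e2 : θhat + s • u - ψ = (s - 1) • u := by rw [hu]; module
    rw [e1, real_inner_smul_right] at hA
    rw [e2, real_inner_smul_right] at hB
    have hXnn : 0 ≤ ⟪F (θhat + s • u), u⟫ := by nlinarith [hA, h0]
    have hXle : ⟪F (θhat + s • u), u⟫ ≤ 0 := by nlinarith [hB, h1]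
    linarith
  have h14 := hzero (1/4) (by norm_num) (by norm_num)
  have h34 := hzero (3/4) (by norm_num) (by norm_num)
  have hm := hmono (θhat + (3/4:ℝ) • u) (θhat + (1/4:ℝ) • u)
  have hdiff : (θhat + (3/4:ℝ) • u) - (θhat + (1/4:ℝ) • u) = (1/2:ℝ) • u := by
    rw [add_sub_add_left_eq_sub, ← sub_smul]; norm_num
  rw [hdiff, inner_sub_left, real_inner_smul_right, real_inner_smul_right] at hm
  have hl := hlam ((1/2:ℝ) • u)
  have hmul := mul_le_mul_of_nonneg_left hl hmg.le
  have hml := mul_pos hmg hpos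
  have hnorm : ‖(1/2:ℝ) • u‖ ^ 2 ≤ 0 := by nlinarith [hm, hmul, h14, h34, hml]
  have hz : (1/2:ℝ) • u = 0 := by
    have h5 : ‖(1/2:ℝ) • u‖ = 0 := le_antisymm (by nlinarith [norm_nonneg ((1/2:ℝ) • u)])
      (norm_nonneg _)
    exact norm_eq_zero.mp h5
  have huz : u = 0 := by
    rcases smul_eq_zero.mp hz with h | h
    · norm_num at h
    · exact h
  have := sub_eq_zero.mp (hu ▸ huz)
  exact this
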